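/- Let X be a Banach space, A a bounded linear operator on X, (K_n)_{n≥1} compact maps on X, and f_n(x) = (A + K_n)⋯(A + K_1)x. Let (a_n) be a sequence of positive reals with a_n → 0 and L ⊆ ℕ an infinite set. Then the set {x ∈ X : ‖f_n(x)‖ ≥ a_n·‖A^n‖_μ for infinitely many n ∈ L} is residual (contains a dense Gδ) in X. -/

import Mathlib

/-- The μ-measure of non-compactness of a bounded operator. -/
noncomputable def muNorm {X : Type*} [NormedAddCommGroup X] [NormedSpace ℂ X]
    (A : X →L[ℂ] X) : ℝ :=
  sInf {c : ℝ | ∃ M : Submodule ℂ X, IsClosed (M : Set X) ∧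
    FiniteDimensional ℂ (X ⧸ M) ∧ c = ‖A.comp M.subtypeL‖}

section aux
variable {X : Type*} [NormedAddCommGroup X] [NormedSpace ℂ X]

lemma muNorm_le (A : X →L[ℂ] X) (M : Submodule ℂ X) (h1 : IsClosed (M : Set X))
    (h2 : FiniteDimensional ℂ (X ⧸ M)) : muNorm A ≤ ‖A.comp M.subtypeL‖ := by
  refine csInf_le ⟨0, ?_⟩ ⟨M, h1, h2, rfl⟩
  rintro c ⟨M', -, -, rfl⟩; positivity

lemma infDist_add_mem (F : Submodule ℂ X) (y w : X) (hw : w ∈ F) :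
    Metric.infDist (y + w) (F : Set X) = Metric.infDist y (F : Set X) := by
  have hiso : Isometry (fun z : X => z + w) :=
    Isometry.of_dist_eq (fun a b => by simp [dist_eq_norm, add_sub_add_right_eq_sub])
  have himg : (fun z : X => z + w) '' (F : Set X) = (F : Set X) := by
    ext z
    constructor
    · rintro ⟨m, hm, rfl⟩; exact F.add_mem hm hw
    · intro hz; exact ⟨z - w, F.sub_mem hz hw, by simp⟩
  conv_lhs => rw [← himg]
  rw [Metric.infDist_image hiso]

open Pointwise in
lemma infDist_smul_submodule (F : Submodule ℂ X) {c : ℂ} (hc : c ≠ 0) (y : X) :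
    Metric.infDist (c • y) (F : Set X) = ‖c‖ * Metric.infDist y (F : Set X) := by
  have himg : c • (F : Set X) = (F : Set X) := by
    ext z
    constructor
    · rintro ⟨m, hm, rfl⟩; exact F.smul_mem c hm
    · intro hz; exact ⟨c⁻¹ • z, F.smul_mem _ hz, smul_inv_smul₀ hc z⟩
  conv_lhs => rw [← himg]
  rw [infDist_smul₀ hc]

end aux

section key
variable {X : Type*} [NormedAddCommGroup X] [NormedSpace ℂ X] [CompleteSpace X]

lemma muNorm_key (T : X →L[ℂ] X) (F : Submodule ℂ X) [FiniteDimensional ℂ F] {t : ℝ}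
    (h : ∀ u : X, ‖u‖ ≤ 1 → Metric.infDist (T u) (F : Set X) ≤ t) :
    muNorm T ≤ 2 * t := by
  have ht : 0 ≤ t := by
    have h0 := h 0 (by simp)
    rwa [map_zero, Metric.infDist_zero_of_mem F.zero_mem] at h0
  refine le_of_forall_pos_le_add fun δ hδ => ?_
  set δ' : ℝ := δ / 8 with hδ'def
  have hδ' : 0 < δ' := by positivity
  set R : ℝ := ‖T‖ + t + δ' with hRdef
  have hKF : IsCompact (Subtype.val '' (Metric.closedBall (0 : F) R)) :=
    (isCompact_closedBall (0 : F) R).image continuous_subtype_val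
  obtain ⟨W, hWfin, hWcov⟩ := (Metric.totallyBounded_iff.mp hKF.totallyBounded) δ' hδ'
  have hgex : ∀ w : X, ∃ g : X →L[ℂ] ℂ, ‖g‖ ≤ 1 ∧ g w = ‖w‖ := fun w =>
    exists_dual_vector'' ℂ w
  choose g hg1 hg2 using hgex
  set Wf : Finset X := hWfin.toFinset with hWfdef
  set Φ : X →L[ℂ] (Wf → ℂ) :=
    ContinuousLinearMap.pi (fun w : Wf => (g w.1).comp T) with hΦdef
  set M : Submodule ℂ X := LinearMap.ker (Φ : X →ₗ[ℂ] (Wf → ℂ)) with hMdef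
  have hMclosed : IsClosed (M : Set X) := ContinuousLinearMap.isClosed_ker Φ
  have hMfd : FiniteDimensional ℂ (X ⧸ M) := by
    have e := (Φ : X →ₗ[ℂ] (Wf → ℂ)).quotKerEquivRange
    have : FiniteDimensional ℂ (LinearMap.range (Φ : X →ₗ[ℂ] (Wf → ℂ))) := inferInstance
    have hker : LinearMap.ker (Φ : X →ₗ[ℂ] (Wf → ℂ)) = M := rfl
    rw [hker] at e
    exact e.symm.finiteDimensional
  have hb : ∀ u : X, u ∈ M → ‖u‖ ≤ 1 → ‖T u‖ ≤ 2 * t + 5 * δ' := by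
    intro u huM hu1
    have h1 : Metric.infDist (T u) (F : Set X) < t + δ' := lt_of_le_of_lt (h u hu1) (by linarith)
    obtain ⟨φ, hφF, hφd⟩ := (Metric.infDist_lt_iff ⟨0, F.zero_mem⟩).mp h1
    rw [dist_eq_norm] at hφd
    have hTu : ‖T u‖ ≤ ‖T‖ := T.unit_le_opNorm u hu1
    have hφn : ‖φ‖ ≤ R := by
      have h2 : ‖φ‖ ≤ ‖T u‖ + ‖T u - φ‖ := by
        simpa [sub_sub_cancel] using norm_sub_le (T u) (T u - φ)
      have : R = ‖T‖ + t + δ' := hRdef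
      linarith
    have hφKF : φ ∈ Subtype.val '' (Metric.closedBall (0 : F) R) := by
      refine ⟨⟨φ, hφF⟩, ?_, rfl⟩
      simpa [Metric.mem_closedBall, dist_eq_norm] using hφn
    obtain ⟨w, hwW, hwb⟩ := Set.mem_iUnion₂.mp (hWcov hφKF)
    have hwWf : w ∈ Wf := hWfin.mem_toFinset.mpr hwW
    have hΦu : Φ u = 0 := huM
    have hgw0 : g w (T u) = 0 := by
      have := congrFun hΦu ⟨w, hwWf⟩
      simpa [hΦdef] using this
    have hwd : ‖φ - w‖ < δ' := by
      rw [Metric.mem_ball, dist_eq_norm] at hwb; exact hwb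
    have hwnorm : ‖w‖ ≤ t + 3 * δ' := by
      have heq : (‖w‖ : ℂ) = g w (w - T u) := by
        rw [map_sub, hg2 w, hgw0, sub_zero]
      have h2 : ‖w‖ ≤ ‖w - T u‖ := by
        have h2' := congrArg norm heq
        rw [Complex.norm_real, Real.norm_eq_abs, abs_of_nonneg (norm_nonneg w)] at h2'
        calc ‖w‖ = ‖g w (w - T u)‖ := h2'
          _ ≤ ‖g w‖ * ‖w - T u‖ := (g w).le_opNorm _
          _ ≤ 1 * ‖w - T u‖ := mul_le_mul_of_nonneg_right (hg1 w) (norm_nonneg _)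
          _ = ‖w - T u‖ := one_mul _
      have h3 : ‖w - T u‖ ≤ ‖w - φ‖ + ‖φ - T u‖ := norm_sub_le_norm_sub_add_norm_sub w φ (T u)
      have h4 : ‖w - φ‖ < δ' := by rwa [norm_sub_rev]
      have h5 : ‖φ - T u‖ < t + δ' := by rwa [norm_sub_rev] at hφd
      linarith
    have h6 : ‖T u - w‖ ≤ ‖T u - φ‖ + ‖φ - w‖ := norm_sub_le_norm_sub_add_norm_sub _ _ _
    have h7 : ‖T u‖ ≤ ‖T u - w‖ + ‖w‖ := by
      simpa [sub_add_cancel] using norm_add_le (T u - w) w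
    linarith
  have hC0 : (0 : ℝ) ≤ 2 * t + 5 * δ' := by linarith
  have hop : ‖T.comp M.subtypeL‖ ≤ 2 * t + 5 * δ' := by
    refine ContinuousLinearMap.opNorm_le_bound _ hC0 fun x => ?_
    rcases eq_or_ne (x : X) 0 with hx0 | hx0
    · simp [ContinuousLinearMap.comp_apply, hx0]
    · have hxn : (0 : ℝ) < ‖(x : X)‖ := norm_pos_iff.mpr hx0
      set c : ℂ := ((‖(x : X)‖⁻¹ : ℝ) : ℂ) with hcdef
      have hcn : ‖c‖ = ‖(x : X)‖⁻¹ := by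
        rw [hcdef, Complex.norm_real, Real.norm_eq_abs, abs_of_nonneg (by positivity)]
      have hu1 : ‖c • (x : X)‖ ≤ 1 := by
        rw [norm_smul, hcn, inv_mul_cancel₀ (ne_of_gt hxn)]
      have huM : c • (x : X) ∈ M := M.smul_mem c x.2
      have := hb (c • (x : X)) huM hu1
      rw [map_smul, norm_smul, hcn] at this
      have h8 : ‖T (x : X)‖ ≤ (2 * t + 5 * δ') * ‖(x : X)‖ := by
        rw [inv_mul_le_iff₀ hxn] at this
        linarith [this]
      simpa [ContinuousLinearMap.comp_apply] using h8
  have := le_trans (muNorm_le T M hMclosed hMfd) hop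
  have h9 : 5 * δ' ≤ δ := by rw [hδ'def]; linarith
  linarith

end key

open Pointwise
section orbit
variable {X : Type*} [NormedAddCommGroup X] [NormedSpace ℂ X] [CompleteSpace X]

lemma orbit_props (A : X →L[ℂ] X) (K : ℕ → X → X)
    (hK : ∀ j, 1 ≤ j → Continuous (K j) ∧
      ∀ B : Set X, Bornology.IsBounded B → IsCompact (closure (K j '' B)))
    (f : ℕ → X → X) (hf0 : ∀ x, f 0 x = x)
    (hfs : ∀ j x, f (j + 1) x = A (f j x) + K (j + 1) (f j x)) :
    ∀ n, Continuous (f n) ∧ ∀ B : Set X, Bornology.IsBounded B →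
      ∃ C : Set X, IsCompact C ∧ ∀ x ∈ B, f n x - (A ^ n) x ∈ C := by
  intro n
  induction n with
  | zero =>
    constructor
    · have hid : f 0 = id := funext hf0
      rw [hid]; exact continuous_id
    · intro B _
      refine ⟨{0}, isCompact_singleton, fun x _ => ?_⟩
      simp [hf0 x, pow_zero]
  | succ n ih =>
    have hcont : Continuous (f (n + 1)) := by
      have hrw : f (n + 1) = fun x => A (f n x) + K (n + 1) (f n x) := funext (hfs n)
      rw [hrw]
      exact (A.continuous.comp ih.1).add ((hK (n + 1) (by omega)).1.comp ih.1)
    refine ⟨hcont, fun B hB => ?_⟩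
    obtain ⟨C, hCc, hCm⟩ := ih.2 B hB
    have hAB : Bornology.IsBounded ((A ^ n) '' B) := ((A ^ n).lipschitz.isBounded_image hB)
    have hfB : Bornology.IsBounded (f n '' B) := by
      have hsub : f n '' B ⊆ (A ^ n) '' B + C := by
        rintro - ⟨x, hx, rfl⟩
        have : f n x = (A ^ n) x + (f n x - (A ^ n) x) := by abel
        rw [this]
        exact Set.add_mem_add (Set.mem_image_of_mem _ hx) (hCm x hx)
      exact (hAB.add hCc.isBounded).subset hsub
    have hK2 : IsCompact (closure (K (n + 1) '' (f n '' B))) :=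
      (hK (n + 1) (by omega)).2 _ hfB
    refine ⟨A '' C + closure (K (n + 1) '' (f n '' B)),
      (hCc.image A.continuous).add hK2, fun x hx => ?_⟩
    have heq : f (n + 1) x - (A ^ (n + 1)) x
        = A (f n x - (A ^ n) x) + K (n + 1) (f n x) := by
      rw [hfs n x, pow_succ' A n, ContinuousLinearMap.mul_apply, map_sub]
      abel
    rw [heq]
    exact Set.add_mem_add (Set.mem_image_of_mem _ (hCm x hx))
      (subset_closure (Set.mem_image_of_mem _ (Set.mem_image_of_mem _ hx)))

end orbit


/-- The set of initial data whose nonlinear orbits satisfy `‖f_n(x)‖ ≥ a_n ‖Aⁿ‖_μ` for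
infinitely many `n` in a given infinite set `L` is residual. -/
theorem stmt_6 (X : Type*) [NormedAddCommGroup X] [NormedSpace ℂ X] [CompleteSpace X]
    (hX : ¬ FiniteDimensional ℂ X)
    (A : X →L[ℂ] X) (K : ℕ → X → X)
    (hK : ∀ j, 1 ≤ j → Continuous (K j) ∧
      ∀ B : Set X, Bornology.IsBounded B → IsCompact (closure (K j '' B)))
    (f : ℕ → X → X) (hf0 : ∀ x, f 0 x = x)
    (hfs : ∀ j x, f (j + 1) x = A (f j x) + K (j + 1) (f j x))
    (a : ℕ → ℝ) (ha : ∀ n, 0 < a n)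
    (ha0 : Filter.Tendsto a Filter.atTop (nhds 0))
    (L : Set ℕ) (hL : L.Infinite) :
    {x : X | {n | n ∈ L ∧ ‖f n x‖ ≥ a n * muNorm (A ^ n)}.Infinite} ∈ residual X := by
  classical
  have orbit := orbit_props A K hK f hf0 hfs
  set V : ℕ → Set X := fun n => {x | muNorm (A ^ n) ≤ 0 ∨ a n * muNorm (A ^ n) < ‖f n x‖}
    with hVdef
  have hVopen : ∀ n, IsOpen (V n) := by
    intro n
    by_cases h : muNorm (A ^ n) ≤ 0
    · have : V n = Set.univ := by ext x; simp [hVdef, h]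
      rw [this]; exact isOpen_univ
    · have : V n = {x | a n * muNorm (A ^ n) < ‖f n x‖} := by
        ext x; simp [hVdef, h]
      rw [this]
      exact isOpen_lt continuous_const (continuous_norm.comp (orbit n).1)
  have hVsub : ∀ n x, x ∈ V n → a n * muNorm (A ^ n) ≤ ‖f n x‖ := by
    intro n x hx
    rcases hx with h | h
    · exact le_trans (mul_nonpos_of_nonneg_of_nonpos (le_of_lt (ha n)) h) (norm_nonneg _)
    · exact le_of_lt h
  set U : ℕ → Set X := fun N => ⋃ n ∈ {m : ℕ | m ∈ L ∧ N ≤ m}, V n with hUdef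
  have hUopen : ∀ N, IsOpen (U N) := fun N => isOpen_biUnion fun n _ => hVopen n
  have hUdense : ∀ N, Dense (U N) := by
    intro N
    rw [Metric.dense_iff]
    intro x0 r hr
    have h8 : ∀ᶠ n in Filter.atTop, a n < r / 8 :=
      ha0.eventually_lt_const (by positivity)
    obtain ⟨N', hN'⟩ := Filter.eventually_atTop.mp h8
    obtain ⟨n, hnL, hnlt⟩ := hL.exists_gt (max N N')
    have hnN : N ≤ n := le_trans (le_max_left _ _) (le_of_lt hnlt)
    have han : a n < r / 8 := hN' n (le_trans (le_max_right _ _) (le_of_lt hnlt))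
    by_cases hμ : muNorm (A ^ n) ≤ 0
    · exact ⟨x0, Metric.mem_ball_self hr, Set.mem_biUnion ⟨hnL, hnN⟩ (Or.inl hμ)⟩
    push_neg at hμ
    set μ : ℝ := muNorm (A ^ n) with hμdef
    set ε' : ℝ := r / 2 with hε'def
    have hε'pos : 0 < ε' := by positivity
    obtain ⟨C, hCc, hCm⟩ := (orbit n).2 (Metric.closedBall x0 ε') Metric.isBounded_closedBall
    set S : Set X := (fun c => (A ^ n) x0 + c) '' C with hSdef
    have hScomp : IsCompact S := hCc.image (continuous_const.add continuous_id)
    have hδpos : 0 < ε' * μ / 8 := by positivity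
    obtain ⟨W, hWfin, hWcov⟩ :=
      (Metric.totallyBounded_iff.mp hScomp.totallyBounded) (ε' * μ / 8) hδpos
    set F : Submodule ℂ X := Submodule.span ℂ W with hFdef
    haveI : FiniteDimensional ℂ F := FiniteDimensional.span_of_finite ℂ hWfin
    have hkey : ∃ u : X, ‖u‖ ≤ 1 ∧ 3 * μ / 8 < Metric.infDist ((A ^ n) u) (F : Set X) := by
      by_contra hcon
      push_neg at hcon
      have := muNorm_key (A ^ n) F (t := 3 * μ / 8) hcon
      rw [← hμdef] at this
      linarith
    obtain ⟨u, hu1, hud⟩ := hkey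
    set c : ℂ := ((ε' : ℝ) : ℂ) with hcdef
    have hcne : c ≠ 0 := by
      rw [hcdef]
      exact_mod_cast ne_of_gt hε'pos
    have hcnorm : ‖c‖ = ε' := by
      rw [hcdef, Complex.norm_real, Real.norm_eq_abs, abs_of_pos hε'pos]
    set x : X := x0 + c • u with hxdef
    have hxcb : x ∈ Metric.closedBall x0 ε' := by
      rw [Metric.mem_closedBall, dist_eq_norm, hxdef, add_sub_cancel_left, norm_smul, hcnorm]
      calc ε' * ‖u‖ ≤ ε' * 1 := mul_le_mul_of_nonneg_left hu1 (le_of_lt hε'pos)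
        _ = ε' := mul_one _
    have hxball : x ∈ Metric.ball x0 r := by
      rw [Metric.mem_ball]
      have := Metric.mem_closedBall.mp hxcb
      rw [hε'def] at this
      linarith
    set v : X := (A ^ n) x0 + (f n x - (A ^ n) x) with hvdef
    have hvS : v ∈ S := Set.mem_image_of_mem _ (hCm x hxcb)
    have hfnx : f n x = c • ((A ^ n) u) + v := by
      rw [hvdef, hxdef, map_add, map_smul]
      abel
    obtain ⟨w, hwW, hwb⟩ := Set.mem_iUnion₂.mp (hWcov hvS)
    have hwF : w ∈ F := Submodule.subset_span hwW
    have hvw : ‖v - w‖ < ε' * μ / 8 := by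
      rw [Metric.mem_ball, dist_eq_norm] at hwb; exact hwb
    have h0F : Metric.infDist (f n x) (F : Set X) ≤ ‖f n x‖ := by
      have := Metric.infDist_le_dist_of_mem (x := f n x) F.zero_mem
      rwa [dist_zero_right] at this
    have hlip : Metric.infDist (c • ((A ^ n) u) + w) (F : Set X)
        ≤ Metric.infDist (f n x) (F : Set X) + ‖v - w‖ := by
      have h1 := Metric.infDist_le_infDist_add_dist (x := c • ((A ^ n) u) + w)
        (y := f n x) (s := (F : Set X))
      have h2 : dist (c • ((A ^ n) u) + w) (f n x) = ‖v - w‖ := by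
        rw [hfnx, dist_eq_norm, norm_sub_rev]
        congr 1
        abel
      rwa [h2] at h1
    have htrans : Metric.infDist (c • ((A ^ n) u) + w) (F : Set X)
        = Metric.infDist (c • ((A ^ n) u)) (F : Set X) := infDist_add_mem F _ w hwF
    have hsm : Metric.infDist (c • ((A ^ n) u)) (F : Set X)
        = ε' * Metric.infDist ((A ^ n) u) (F : Set X) := by
      rw [infDist_smul_submodule F hcne, hcnorm]
    have hmul : ε' * (3 * μ / 8) ≤ ε' * Metric.infDist ((A ^ n) u) (F : Set X) :=
      mul_le_mul_of_nonneg_left (le_of_lt hud) (le_of_lt hε'pos)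
    have hfinal : a n * μ < ‖f n x‖ := by
      have hanμ : a n * μ < (r / 8) * μ := mul_lt_mul_of_pos_right han hμ
      have : (r / 8) * μ = ε' * μ / 4 := by rw [hε'def]; ring
      nlinarith [h0F, hlip, htrans, hsm, hmul, hvw]
    exact ⟨x, hxball, Set.mem_biUnion ⟨hnL, hnN⟩ (Or.inr hfinal)⟩
  have hsub : (⋂ N, U N) ⊆ {x : X | {n | n ∈ L ∧ ‖f n x‖ ≥ a n * muNorm (A ^ n)}.Infinite} := by
    intro x hx
    simp only [Set.mem_iInter] at hx
    apply Set.infinite_of_not_bddAbove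
    rintro ⟨b, hb⟩
    obtain ⟨n, hn, hxV⟩ := Set.mem_iUnion₂.mp (hx (b + 1))
    have hn2 : b + 1 ≤ n := hn.2
    have hnb : n ≤ b := hb ⟨hn.1, hVsub n x hxV⟩
    omega
  exact Filter.mem_of_superset
    (countable_iInter_mem.mpr fun N => residual_of_dense_open (hUopen N) (hUdense N)) hsub
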